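/- arXiv:1503.02607 — 3 statements merged into one kernel-verified Lean document; each statement's English description precedes it below -/
import Mathlib

section
/- Let R be a commutative Noetherian ring, I an ideal, and W₁,…,Wᵣ ideals containing I. If for every prime p associated to I the induced map on p-socles soc_p(I) → R_p/(W₁)_p ⊕ ⋯ ⊕ R_p/(Wᵣ)_p is injective, then I = W₁ ∩ ⋯ ∩ Wᵣ, where soc_p(I) = {f ∈ R_p/I_p : p·f = 0}. -/
theorem stmt8 (R : Type*) [CommRing R] [IsNoetherianRing R]
    (I : Ideal R) (r : ℕ) (W : Fin r → Ideal R) (hW : ∀ i, I ≤ W i)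
    (hsoc : ∀ p : Ideal R, p ∈ associatedPrimes R (R ⧸ I) → ∀ (hp : p.IsPrime),
      letI Rp := Localization.AtPrime p
      letI Ip := I.map (algebraMap R Rp)
      Set.InjOn
        (fun f : Rp ⧸ Ip => fun i : Fin r =>
          Ideal.Quotient.factor (S := Ip) (T := (W i).map (algebraMap R Rp))
            (Ideal.map_mono (hW i)) f)
        {f : Rp ⧸ Ip | ∀ a ∈ p, Ideal.Quotient.mk Ip (algebraMap R Rp a) * f = 0}) :
    I = ⨅ i, W i := by
  refine le_antisymm (le_iInf hW) ?_
  by_contra hlt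
  obtain ⟨x0, hx0, hx0I⟩ := SetLike.not_le_iff_exists.mp hlt
  set N : Submodule R (R ⧸ I) := Submodule.map I.mkQ (⨅ i, W i : Ideal R) with hNdef
  haveI hN : Nontrivial N := by
    refine ⟨⟨I.mkQ x0, Submodule.mem_map_of_mem hx0⟩, 0, ?_⟩
    simp only [ne_eq, Submodule.mk_eq_zero]
    intro h
    exact hx0I (Ideal.Quotient.eq_zero_iff_mem.mp (by simpa using h))
  obtain ⟨p, hp⟩ := associatedPrimes.nonempty R N
  have hpM : p ∈ associatedPrimes R (R ⧸ I) :=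
    hp.map_of_injective N.subtype N.injective_subtype
  obtain ⟨hprime, y, hy⟩ := isAssociatedPrime_iff.mp hp
  obtain ⟨x, hxW, hxy⟩ := y.2
  haveI := hprime
  -- annihilator characterization
  have hann : ∀ a : R, a ∈ p ↔ a * x ∈ I := by
    intro a
    rw [hy, Submodule.mem_colon_singleton, Submodule.mem_bot]
    have : a • y = 0 ↔ a • (y : R ⧸ I) = 0 := by
      constructor
      · intro h; exact congrArg Subtype.val h
      · intro h; exact Subtype.ext h
    rw [this, ← hxy, ← map_smul, smul_eq_mul]
    exact Submodule.Quotient.mk_eq_zero I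
  set Rp := Localization.AtPrime p with hRp
  set Ip := I.map (algebraMap R Rp) with hIp
  have key := hsoc p hpM hprime
  set f : Rp ⧸ Ip := Ideal.Quotient.mk Ip (algebraMap R Rp x) with hf
  have hfsoc : f ∈ {f : Rp ⧸ Ip | ∀ a ∈ p, Ideal.Quotient.mk Ip (algebraMap R Rp a) * f = 0} := by
    intro a ha
    have hax : a * x ∈ I := (hann a).mp ha
    have : algebraMap R Rp (a * x) ∈ Ip := Ideal.mem_map_of_mem _ hax
    calc Ideal.Quotient.mk Ip (algebraMap R Rp a) * f
        = Ideal.Quotient.mk Ip (algebraMap R Rp (a * x)) := by rw [hf, map_mul, map_mul]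
      _ = 0 := Ideal.Quotient.eq_zero_iff_mem.mpr this
  have h0soc : (0 : Rp ⧸ Ip) ∈
      {f : Rp ⧸ Ip | ∀ a ∈ p, Ideal.Quotient.mk Ip (algebraMap R Rp a) * f = 0} := by
    intro a _; rw [mul_zero]
  have hmapeq : (fun i : Fin r =>
      Ideal.Quotient.factor (S := Ip) (T := (W i).map (algebraMap R Rp)) (Ideal.map_mono (hW i)) f)
      = (fun i : Fin r =>
      Ideal.Quotient.factor (S := Ip) (T := (W i).map (algebraMap R Rp)) (Ideal.map_mono (hW i)) 0) := by
    funext i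
    rw [map_zero, hf, Ideal.Quotient.factor_mk]
    exact Ideal.Quotient.eq_zero_iff_mem.mpr
      (Ideal.mem_map_of_mem _ ((Submodule.mem_iInf _).mp hxW i))
  have hf0 : f = 0 := key hfsoc h0soc hmapeq
  have hxIp : algebraMap R Rp x ∈ Ip := Ideal.Quotient.eq_zero_iff_mem.mp hf0
  rw [hIp, IsLocalization.mem_map_algebraMap_iff p.primeCompl] at hxIp
  obtain ⟨⟨⟨a, haI⟩, s⟩, hsa⟩ := hxIp
  rw [← map_mul, IsLocalization.eq_iff_exists p.primeCompl] at hsa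
  obtain ⟨c, hc⟩ := hsa
  have hmem : (↑c * ↑s : R) ∈ p := by
    rw [hann]
    have : (↑c * ↑s : R) * x = ↑c * a := by rw [← hc]; ring
    rw [this]
    exact Ideal.mul_mem_left _ _ haI
  exact (mul_mem c.2 s.2 : (↑c * ↑s : R) ∈ p.primeCompl) hmem
end

section
/- Let k be a field and I = ⟨x²y − xy², x³, y³⟩ ⊂ k[x,y]. There is no expression I = I₁ ∩ I₂ with both I₁ and I₂ irreducible ideals generated by binomials (elements of the form λx^a y^b − μx^c y^d with λ, μ ∈ k). -/
open MvPolynomial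

/-- A binomial in k[x,y]: an element of the form λ x^a y^b − μ x^c y^d. -/
def IsBinomialPoly {k : Type*} [Field k] (f : MvPolynomial (Fin 2) k) : Prop :=
  ∃ (lam mu : k) (a b c d : ℕ),
    f = MvPolynomial.C lam * X 0 ^ a * X 1 ^ b - MvPolynomial.C mu * X 0 ^ c * X 1 ^ d

/-- An ideal is binomial if it can be generated by binomials. -/
def IsBinomialIdeal {k : Type*} [Field k] (J : Ideal (MvPolynomial (Fin 2) k)) : Prop :=
  ∃ S : Set (MvPolynomial (Fin 2) k), (∀ f ∈ S, IsBinomialPoly f) ∧ J = Ideal.span S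

/-- An ideal is irreducible if it is not the intersection of two strictly larger ideals. -/
def IsIrreducibleIdeal {k : Type*} [Field k] (J : Ideal (MvPolynomial (Fin 2) k)) : Prop :=
  ∀ A B : Ideal (MvPolynomial (Fin 2) k), J = A ⊓ B → J = A ∨ J = B

namespace Stmt11Aux

noncomputable def e (a b : ℕ) : Fin 2 →₀ ℕ := Finsupp.single 0 a + Finsupp.single 1 b

@[simp] lemma e_apply0 (a b : ℕ) : e a b 0 = a := by simp [e]
@[simp] lemma e_apply1 (a b : ℕ) : e a b 1 = b := by simp [e]

lemma e_le {a b c d : ℕ} : e a b ≤ e c d ↔ a ≤ c ∧ b ≤ d := by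
  constructor
  · intro h
    rw [Finsupp.le_def] at h
    exact ⟨by simpa using h 0, by simpa using h 1⟩
  · rintro ⟨h1, h2⟩
    rw [Finsupp.le_def]
    intro i; fin_cases i <;> simpa

lemma e_eq {a b c d : ℕ} : e a b = e c d ↔ a = c ∧ b = d := by
  constructor
  · intro h
    exact ⟨by rw [← e_apply0 a b, h, e_apply0], by rw [← e_apply1 a b, h, e_apply1]⟩
  · rintro ⟨rfl, rfl⟩; rfl

lemma e_add (a b c d : ℕ) : e a b + e c d = e (a + c) (b + d) := by
  ext i; fin_cases i <;> simp

lemma e_recon (m : Fin 2 →₀ ℕ) : e (m 0) (m 1) = m := by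
  ext i; fin_cases i <;> simp

@[simp] lemma e_zero : e 0 0 = 0 := by ext i; fin_cases i <;> simp

lemma e_sub {a b c d : ℕ} : e a b - e c d = e (a - c) (b - d) := by
  ext i; fin_cases i <;> simp [Finsupp.tsub_apply]

variable {k : Type*} [Field k]

noncomputable def M (a b : ℕ) : MvPolynomial (Fin 2) k := monomial (e a b) 1

lemma M_eq (a b : ℕ) : (M a b : MvPolynomial (Fin 2) k) = X 0 ^ a * X 1 ^ b := by
  rw [M, X_pow_eq_monomial, X_pow_eq_monomial, monomial_mul, one_mul, e]

lemma CM_eq (r : k) (a b : ℕ) :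
    (monomial (e a b) r : MvPolynomial (Fin 2) k) = C r * X 0 ^ a * X 1 ^ b := by
  rw [X_pow_eq_monomial, X_pow_eq_monomial, MvPolynomial.C_apply, monomial_mul, monomial_mul]
  simp [e]

lemma M_mulM (a b c d : ℕ) : (M a b : MvPolynomial (Fin 2) k) * M c d = M (a+c) (b+d) := by
  rw [M, M, M, monomial_mul, one_mul, e_add]

lemma M_mul_mono (a b c d : ℕ) (r : k) :
    (M a b : MvPolynomial (Fin 2) k) * monomial (e c d) r = monomial (e (a+c) (b+d)) r := by
  rw [M, monomial_mul, one_mul, e_add]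

-- coefficient of a monomial multiple
lemma coeff_mul_mono (p : MvPolynomial (Fin 2) k) (a b c d : ℕ) (r : k) :
    coeff (e c d) (p * monomial (e a b) r) =
      if a ≤ c ∧ b ≤ d then coeff (e (c-a) (d-b)) p * r else 0 := by
  rw [coeff_mul_monomial']
  by_cases h : a ≤ c ∧ b ≤ d
  · rw [if_pos (e_le.2 h), if_pos h, e_sub]
  · rw [if_neg (fun hh => h (e_le.1 hh)), if_neg h]

lemma coeff_mul_mono_zero (p : MvPolynomial (Fin 2) k) {a b c d : ℕ} (r : k)
    (h : ¬(a ≤ c ∧ b ≤ d)) : coeff (e c d) (p * monomial (e a b) r) = 0 := by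
  rw [coeff_mul_mono, if_neg h]

lemma coeff_mono (a b c d : ℕ) (r : k) :
    coeff (e c d) (monomial (e a b) r : MvPolynomial (Fin 2) k) =
      if a = c ∧ b = d then r else 0 := by
  rw [coeff_monomial]
  by_cases h : a = c ∧ b = d
  · rw [if_pos h, if_pos (e_eq.2 h)]
  · rw [if_neg h, if_neg (fun hh => h (e_eq.1 hh))]

end Stmt11Aux
section Part2
namespace Stmt11Aux
variable {k : Type*} [Field k]

noncomputable def g1 : MvPolynomial (Fin 2) k := M 2 1 - M 1 2
noncomputable def g2 : MvPolynomial (Fin 2) k := M 3 0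
noncomputable def g3 : MvPolynomial (Fin 2) k := M 0 3

noncomputable def Iid : Ideal (MvPolynomial (Fin 2) k) := Ideal.span {g1, g2, g3}

lemma mem_span_triple {a b c f : MvPolynomial (Fin 2) k} :
    f ∈ Ideal.span {a, b, c} ↔ ∃ p q r, f = p * a + q * b + r * c := by
  constructor
  · intro hf
    rw [show ({a, b, c} : Set (MvPolynomial (Fin 2) k)) = insert a (insert b {c}) from rfl,
      Ideal.mem_span_insert] at hf
    obtain ⟨p, z, hz, rfl⟩ := hf
    rw [Ideal.mem_span_insert] at hz
    obtain ⟨q, w, hw, rfl⟩ := hz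
    rw [Ideal.mem_span_singleton'] at hw
    obtain ⟨r, rfl⟩ := hw
    exact ⟨p, q, r, by ring⟩
  · rintro ⟨p, q, r, rfl⟩
    have ha : a ∈ Ideal.span ({a, b, c} : Set (MvPolynomial (Fin 2) k)) :=
      Ideal.subset_span (by simp)
    have hb : b ∈ Ideal.span ({a, b, c} : Set (MvPolynomial (Fin 2) k)) :=
      Ideal.subset_span (by simp)
    have hc : c ∈ Ideal.span ({a, b, c} : Set (MvPolynomial (Fin 2) k)) :=
      Ideal.subset_span (by simp)
    exact add_mem (add_mem (Ideal.mul_mem_left _ _ ha) (Ideal.mul_mem_left _ _ hb))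
      (Ideal.mul_mem_left _ _ hc)

lemma coeff_I_small {f : MvPolynomial (Fin 2) k} (hf : f ∈ Iid) {c d : ℕ} (h : c + d ≤ 2) :
    coeff (e c d) f = 0 := by
  rw [Iid, mem_span_triple] at hf
  obtain ⟨p, q, r, rfl⟩ := hf
  rw [g1, g2, g3, M, M, M, M, mul_sub]
  simp only [coeff_add, coeff_sub]
  rw [coeff_mul_mono_zero p (1:k) (by omega), coeff_mul_mono_zero p (1:k) (by omega),
    coeff_mul_mono_zero q (1:k) (by omega), coeff_mul_mono_zero r (1:k) (by omega)]
  ring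

lemma zeta_I {f : MvPolynomial (Fin 2) k} (hf : f ∈ Iid) :
    coeff (e 2 1) f + coeff (e 1 2) f = 0 := by
  rw [Iid, mem_span_triple] at hf
  obtain ⟨p, q, r, rfl⟩ := hf
  rw [g1, g2, g3, M, M, M, M, mul_sub]
  simp only [coeff_add, coeff_sub]
  rw [coeff_mul_mono, coeff_mul_mono, coeff_mul_mono, coeff_mul_mono, coeff_mul_mono,
    coeff_mul_mono, coeff_mul_mono, coeff_mul_mono]
  norm_num

lemma g1_mem : (g1 : MvPolynomial (Fin 2) k) ∈ Iid := Ideal.subset_span (by simp)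
lemma g2_mem : (g2 : MvPolynomial (Fin 2) k) ∈ Iid := Ideal.subset_span (by simp)
lemma g3_mem : (g3 : MvPolynomial (Fin 2) k) ∈ Iid := Ideal.subset_span (by simp)

lemma mono_mem_I {a b : ℕ} (r : k) (h : 3 ≤ a ∨ 3 ≤ b ∨ (a = 2 ∧ b = 2)) :
    (monomial (e a b) r : MvPolynomial (Fin 2) k) ∈ Iid := by
  rcases h with h | h | ⟨rfl, rfl⟩
  · have : (monomial (e a b) r : MvPolynomial (Fin 2) k) = monomial (e (a-3) b) r * g2 := by
      rw [g2, M, monomial_mul, e_add, mul_one, Nat.sub_add_cancel h, add_zero]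
    rw [this]
    exact Ideal.mul_mem_left _ _ g2_mem
  · have : (monomial (e a b) r : MvPolynomial (Fin 2) k) = monomial (e a (b-3)) r * g3 := by
      rw [g3, M, monomial_mul, e_add, mul_one, Nat.sub_add_cancel h, add_zero]
    rw [this]
    exact Ideal.mul_mem_left _ _ g3_mem
  · have : (monomial (e 2 2) r : MvPolynomial (Fin 2) k) =
        monomial (e 0 1) r * g1 + monomial (e 1 0) r * g3 := by
      rw [g1, g3, M, M, M, mul_sub, monomial_mul, monomial_mul, monomial_mul, e_add, e_add, e_add]
      norm_num
    rw [this]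
    exact add_mem (Ideal.mul_mem_left _ _ g1_mem) (Ideal.mul_mem_left _ _ g3_mem)

noncomputable def NF (f : MvPolynomial (Fin 2) k) : MvPolynomial (Fin 2) k :=
  monomial (e 0 0) (coeff (e 0 0) f) + monomial (e 1 0) (coeff (e 1 0) f)
  + monomial (e 0 1) (coeff (e 0 1) f) + monomial (e 2 0) (coeff (e 2 0) f)
  + monomial (e 1 1) (coeff (e 1 1) f) + monomial (e 0 2) (coeff (e 0 2) f)
  + monomial (e 2 1) (coeff (e 2 1) f + coeff (e 1 2) f)

lemma coeff_mono_ne {a b c d : ℕ} (h : ¬(a = c ∧ b = d)) (r : k) :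
    coeff (e c d) (monomial (e a b) r : MvPolynomial (Fin 2) k) = 0 := by
  rw [coeff_mono, if_neg h]

lemma NF_mono_high (a b : ℕ) (r : k) (h : 3 ≤ a ∨ 3 ≤ b) :
    NF (monomial (e a b) r : MvPolynomial (Fin 2) k) = 0 := by
  rw [NF,
    coeff_mono_ne (c := 0) (d := 0) (by omega) r,
    coeff_mono_ne (c := 1) (d := 0) (by omega) r,
    coeff_mono_ne (c := 0) (d := 1) (by omega) r,
    coeff_mono_ne (c := 2) (d := 0) (by omega) r,
    coeff_mono_ne (c := 1) (d := 1) (by omega) r,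
    coeff_mono_ne (c := 0) (d := 2) (by omega) r,
    coeff_mono_ne (c := 2) (d := 1) (by omega) r,
    coeff_mono_ne (c := 1) (d := 2) (by omega) r]
  simp

lemma C_mul_g1 (r : k) : (monomial (e 0 0) r : MvPolynomial (Fin 2) k) * g1
    = monomial (e 2 1) r - monomial (e 1 2) r := by
  rw [g1, M, M, mul_sub, monomial_mul, monomial_mul, e_add, e_add, mul_one]

lemma NF_spec (f : MvPolynomial (Fin 2) k) : f - NF f ∈ Iid := by
  have hadd : ∀ p q : MvPolynomial (Fin 2) k,
      p - NF p ∈ Iid → q - NF q ∈ Iid → (p + q) - NF (p + q) ∈ Iid := by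
    intro p q hp hq
    have : (p + q) - NF (p + q) = (p - NF p) + (q - NF q) := by
      simp only [NF, coeff_add, map_add]
      ring
    rw [this]
    exact add_mem hp hq
  have h0 : (0 : MvPolynomial (Fin 2) k) - NF 0 ∈ Iid := by
    simp [NF]
  have hmono : ∀ m : Fin 2 →₀ ℕ, ∀ r : k,
      (monomial m r : MvPolynomial (Fin 2) k) - NF (monomial m r) ∈ Iid := by
    intro m r
    obtain ⟨a, b, rfl⟩ : ∃ a b, m = e a b := ⟨m 0, m 1, (e_recon m).symm⟩
    rcases Nat.lt_or_ge a 3 with ha | ha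
    · rcases Nat.lt_or_ge b 3 with hb | hb
      · interval_cases a <;> interval_cases b <;>
          simp only [NF, coeff_mono] <;> norm_num
        · -- (1,2) case
          have : (monomial (e 1 2) r : MvPolynomial (Fin 2) k) - monomial (e 2 1) r
              = -(monomial (e 0 0) r * g1) := by
            rw [C_mul_g1]; ring
          rw [this]
          exact neg_mem (Ideal.mul_mem_left _ _ g1_mem)
        · exact mono_mem_I r (by norm_num)
      · rw [NF_mono_high a b r (Or.inr hb), sub_zero]
        exact mono_mem_I r (by omega)
    · rw [NF_mono_high a b r (Or.inl ha), sub_zero]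
      exact mono_mem_I r (by omega)
  have key := Finset.sum_induction (s := f.support) (fun m => (monomial m (coeff m f) : MvPolynomial (Fin 2) k))
    (fun p => p - NF p ∈ Iid) hadd h0 (fun m _ => hmono m (coeff m f))
  have hrw : f - NF f = (∑ m ∈ f.support, monomial m (coeff m f))
      - NF (∑ m ∈ f.support, monomial m (coeff m f)) := by rw [← as_sum]
  rw [hrw]
  exact key

end Stmt11Aux
end Part2
section Part3
namespace Stmt11Aux
variable {k : Type*} [Field k]

lemma M00_one : (M 0 0 : MvPolynomial (Fin 2) k) = 1 := by
  rw [M, e_zero, ← C_apply, C_1]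

lemma mem_scale {J : Ideal (MvPolynomial (Fin 2) k)} {m : Fin 2 →₀ ℕ} {r : k} (hr : r ≠ 0)
    (h : monomial m r ∈ J) : monomial m 1 ∈ J := by
  have h2 := Ideal.mul_mem_left J (C r⁻¹) h
  rwa [C_mul_monomial, inv_mul_cancel₀ hr] at h2

lemma z_not_mem : (M 2 1 : MvPolynomial (Fin 2) k) ∉ Iid := by
  intro h
  have hz := zeta_I h
  rw [M, coeff_mono, coeff_mono] at hz
  norm_num at hz

lemma coeff_M10_mul (f : MvPolynomial (Fin 2) k) (c d : ℕ) (hc : 1 ≤ c) :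
    coeff (e c d) ((M 1 0 : MvPolynomial (Fin 2) k) * f) = coeff (e (c-1) d) f := by
  rw [M, mul_comm, coeff_mul_mono, if_pos ⟨hc, Nat.zero_le d⟩, mul_one, Nat.sub_zero]

lemma coeff_M01_mul (f : MvPolynomial (Fin 2) k) (c d : ℕ) (hd : 1 ≤ d) :
    coeff (e c d) ((M 0 1 : MvPolynomial (Fin 2) k) * f) = coeff (e c (d-1)) f := by
  rw [M, mul_comm, coeff_mul_mono, if_pos ⟨Nat.zero_le c, hd⟩, mul_one, Nat.sub_zero]

lemma socle_rep {w : MvPolynomial (Fin 2) k} (hwI : w ∉ Iid)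
    (hx : (M 1 0 : MvPolynomial (Fin 2) k) * w ∈ Iid)
    (hy : (M 0 1 : MvPolynomial (Fin 2) k) * w ∈ Iid)
    (h20 : coeff (e 2 0) w = 0) :
    ∃ r : k, r ≠ 0 ∧ w - monomial (e 2 1) r ∈ Iid := by
  have h1 : coeff (e 0 0) w = 0 := by
    have := coeff_I_small hx (c := 1) (d := 0) (by norm_num)
    rwa [coeff_M10_mul w 1 0 le_rfl] at this
  have h2 : coeff (e 1 0) w = 0 := by
    have := coeff_I_small hx (c := 2) (d := 0) (by norm_num)
    rwa [coeff_M10_mul w 2 0 (by norm_num)] at this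
  have h3 : coeff (e 0 1) w = 0 := by
    have := coeff_I_small hx (c := 1) (d := 1) (by norm_num)
    rwa [coeff_M10_mul w 1 1 le_rfl] at this
  have h4 : coeff (e 1 1) w = 0 := by
    have := zeta_I hy
    rw [coeff_M01_mul w 2 1 le_rfl, coeff_M01_mul w 1 2 (by norm_num)] at this
    simpa [h20] using this
  have h5 : coeff (e 0 2) w = 0 := by
    have := zeta_I hx
    rw [coeff_M10_mul w 2 1 (by norm_num), coeff_M10_mul w 1 2 le_rfl] at this
    simpa [h4] using this
  have hNF : NF w = monomial (e 2 1) (coeff (e 2 1) w + coeff (e 1 2) w) := by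
    rw [NF, h1, h2, h3, h20, h4, h5]
    simp
  refine ⟨coeff (e 2 1) w + coeff (e 1 2) w, ?_, ?_⟩
  · intro hr
    apply hwI
    have := NF_spec w
    rw [hNF, hr] at this
    simpa using this
  · rw [← hNF]
    exact NF_spec w

lemma socle_aux (J : Ideal (MvPolynomial (Fin 2) k)) :
    ∀ n (f : MvPolynomial (Fin 2) k), f ∈ J → f ∉ Iid →
      (∀ a b : ℕ, a + b = n → (M a b : MvPolynomial (Fin 2) k) * f ∈ Iid) →
      ∃ g, g ∈ J ∧ g ∉ Iid ∧ (M 1 0 : MvPolynomial (Fin 2) k) * g ∈ Iid ∧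
        (M 0 1 : MvPolynomial (Fin 2) k) * g ∈ Iid := by
  intro n
  induction n with
  | zero =>
    intro f _ hfI h
    exact absurd (by simpa [M00_one] using h 0 0 rfl) hfI
  | succ n ih =>
    intro f hfJ hfI h
    by_cases hx : (M 1 0 : MvPolynomial (Fin 2) k) * f ∈ Iid
    · by_cases hy : (M 0 1 : MvPolynomial (Fin 2) k) * f ∈ Iid
      · exact ⟨f, hfJ, hfI, hx, hy⟩
      · refine ih ((M 0 1 : MvPolynomial (Fin 2) k) * f) (Ideal.mul_mem_left _ _ hfJ) hy ?_
        intro a b hab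
        have : (M a b : MvPolynomial (Fin 2) k) * ((M 0 1) * f) = (M a (b+1)) * f := by
          rw [← mul_assoc, M_mulM, add_zero]
        rw [this]
        exact h a (b+1) (by omega)
    · refine ih ((M 1 0 : MvPolynomial (Fin 2) k) * f) (Ideal.mul_mem_left _ _ hfJ) hx ?_
      intro a b hab
      have : (M a b : MvPolynomial (Fin 2) k) * ((M 1 0) * f) = (M (a+1) b) * f := by
        rw [← mul_assoc, M_mulM, add_zero]
      rw [this]
      exact h (a+1) b (by omega)

lemma socle_ex (J : Ideal (MvPolynomial (Fin 2) k)) (hIJ : Iid ≤ J) (hne : Iid ≠ J) :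
    ∃ g, g ∈ J ∧ g ∉ Iid ∧ (M 1 0 : MvPolynomial (Fin 2) k) * g ∈ Iid ∧
      (M 0 1 : MvPolynomial (Fin 2) k) * g ∈ Iid := by
  obtain ⟨f, hfJ, hfI⟩ : ∃ f, f ∈ J ∧ f ∉ Iid := by
    by_contra hcon
    push_neg at hcon
    exact hne (le_antisymm hIJ (fun u hu => hcon u hu))
  refine socle_aux J 4 f hfJ hfI ?_
  intro a b hab
  exact Ideal.mul_mem_right _ _ (mono_mem_I 1 (by omega))

end Stmt11Aux
end Part3
section Part4
namespace Stmt11Aux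
variable {k : Type*} [Field k]

lemma monoM21 : (M 2 1 : MvPolynomial (Fin 2) k) = monomial (e 2 1) 1 := rfl

lemma B1 {J : Ideal (MvPolynomial (Fin 2) k)} (hIJ : Iid ≤ J) {lam mu : k} {a c d : ℕ}
    (hs : monomial (e a 0) lam - monomial (e c d) mu ∈ J) (hlam : lam ≠ 0) (ha : a ≤ 2)
    (hne : ¬(mu = lam ∧ c = a ∧ d = 0)) : (M 2 1 : MvPolynomial (Fin 2) k) ∈ J := by
  have ht : monomial (e 2 1) lam - monomial (e (c + (2-a)) (d+1)) mu ∈ J := by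
    have h1 : (M (2-a) 1 : MvPolynomial (Fin 2) k) *
        (monomial (e a 0) lam - monomial (e c d) mu)
        = monomial (e 2 1) lam - monomial (e (c + (2-a)) (d+1)) mu := by
      rw [mul_sub, M_mul_mono, M_mul_mono,
        (e_eq.2 ⟨by omega, by omega⟩ : e (2-a+a) (1+0) = e 2 1),
        (e_eq.2 ⟨by omega, by omega⟩ : e (2-a+c) (1+d) = e (c + (2-a)) (d+1))]
    rw [← h1]
    exact Ideal.mul_mem_left _ _ hs
  set c' := c + (2-a) with hc'
  set d' := d + 1 with hd'
  by_cases hmu : mu = 0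
  · subst hmu
    rw [monomial_zero, sub_zero] at ht
    rw [monoM21]
    exact mem_scale hlam ht
  by_cases hI3 : 3 ≤ c' ∨ 3 ≤ d' ∨ (c' = 2 ∧ d' = 2)
  · have hm : monomial (e c' d') mu ∈ J := hIJ (mono_mem_I mu hI3)
    have h21 : monomial (e 2 1) lam ∈ J := by
      have := add_mem ht hm
      rwa [sub_add_cancel] at this
    rw [monoM21]
    exact mem_scale hlam h21
  have hcase : (c' = 0 ∧ d' = 1) ∨ (c' = 1 ∧ d' = 1) ∨ (c' = 0 ∧ d' = 2)
      ∨ (c' = 2 ∧ d' = 1) ∨ (c' = 1 ∧ d' = 2) := by omega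
  have h31 : (monomial (e 3 1) lam : MvPolynomial (Fin 2) k) ∈ J :=
    hIJ (mono_mem_I lam (by norm_num))
  rcases hcase with ⟨h1, h2⟩ | ⟨h1, h2⟩ | ⟨h1, h2⟩ | ⟨h1, h2⟩ | ⟨h1, h2⟩
  · -- (0,1) : get xy ∈ J
    rw [h1, h2] at ht
    have hxt : (M 1 0 : MvPolynomial (Fin 2) k) *
        (monomial (e 2 1) lam - monomial (e 0 1) mu)
        = monomial (e 3 1) lam - monomial (e 1 1) mu := by
      rw [mul_sub, M_mul_mono, M_mul_mono]
    have hmem := Ideal.mul_mem_left _ (M 1 0) ht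
    rw [hxt] at hmem
    have h11 : (monomial (e 1 1) mu : MvPolynomial (Fin 2) k) ∈ J := by
      have := sub_mem h31 hmem
      rwa [sub_sub_cancel] at this
    have h11' : (M 1 1 : MvPolynomial (Fin 2) k) ∈ J := mem_scale hmu h11
    have : (M 2 1 : MvPolynomial (Fin 2) k) = M 1 0 * M 1 1 := by rw [M_mulM]
    rw [this]
    exact Ideal.mul_mem_left _ _ h11'
  · -- (1,1) : get x²y ∈ J directly
    rw [h1, h2] at ht
    have hxt : (M 1 0 : MvPolynomial (Fin 2) k) *
        (monomial (e 2 1) lam - monomial (e 1 1) mu)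
        = monomial (e 3 1) lam - monomial (e 2 1) mu := by
      rw [mul_sub, M_mul_mono, M_mul_mono]
    have hmem := Ideal.mul_mem_left _ (M 1 0) ht
    rw [hxt] at hmem
    have h21 : (monomial (e 2 1) mu : MvPolynomial (Fin 2) k) ∈ J := by
      have := sub_mem h31 hmem
      rwa [sub_sub_cancel] at this
    rw [monoM21]
    exact mem_scale hmu h21
  · -- (0,2) : get xy² ∈ J
    rw [h1, h2] at ht
    have hxt : (M 1 0 : MvPolynomial (Fin 2) k) *
        (monomial (e 2 1) lam - monomial (e 0 2) mu)
        = monomial (e 3 1) lam - monomial (e 1 2) mu := by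
      rw [mul_sub, M_mul_mono, M_mul_mono]
    have hmem := Ideal.mul_mem_left _ (M 1 0) ht
    rw [hxt] at hmem
    have h12 : (monomial (e 1 2) mu : MvPolynomial (Fin 2) k) ∈ J := by
      have := sub_mem h31 hmem
      rwa [sub_sub_cancel] at this
    have h12' : (M 1 2 : MvPolynomial (Fin 2) k) ∈ J := mem_scale hmu h12
    have : (M 2 1 : MvPolynomial (Fin 2) k) = g1 + M 1 2 := by rw [g1]; ring
    rw [this]
    exact add_mem (hIJ g1_mem) h12'
  · -- (2,1) : t = monomial (e 2 1) (lam - mu)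
    rw [h1, h2, ← map_sub] at ht
    have hmune : lam - mu ≠ 0 := by
      intro hh
      exact hne ⟨by linear_combination -hh, by omega, by omega⟩
    rw [monoM21]
    exact mem_scale hmune ht
  · -- (1,2) : special case, use s directly
    have had : a = 1 ∨ a = 2 := by omega
    have hu : (M (3-a) 0 : MvPolynomial (Fin 2) k) *
        (monomial (e a 0) lam - monomial (e c d) mu)
        = monomial (e 3 0) lam - monomial (e 2 1) mu := by
      rw [mul_sub, M_mul_mono, M_mul_mono,
        (e_eq.2 ⟨by omega, by omega⟩ : e (3-a+a) (0+0) = e 3 0),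
        (e_eq.2 ⟨by omega, by omega⟩ : e (3-a+c) (0+d) = e 2 1)]
    have hmem := Ideal.mul_mem_left _ (M (3-a) 0) hs
    rw [hu] at hmem
    have h30 : (monomial (e 3 0) lam : MvPolynomial (Fin 2) k) ∈ J :=
      hIJ (mono_mem_I lam (by norm_num))
    have h21 : (monomial (e 2 1) mu : MvPolynomial (Fin 2) k) ∈ J := by
      have := sub_mem h30 hmem
      rwa [sub_sub_cancel] at this
    rw [monoM21]
    exact mem_scale hmu h21

end Stmt11Aux
end Part4
section Part5
namespace Stmt11Aux
variable {k : Type*} [Field k]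

lemma binomial_z {J : Ideal (MvPolynomial (Fin 2) k)} (hbin : IsBinomialIdeal J)
    (hIJ : Iid ≤ J) {f : MvPolynomial (Fin 2) k} (hf : f ∈ J)
    (hxi : coeff (e 2 0) f ≠ 0) : (M 2 1 : MvPolynomial (Fin 2) k) ∈ J := by
  obtain ⟨S, hS, rfl⟩ := hbin
  have hf' : f ∈ Submodule.span (MvPolynomial (Fin 2) k) S := hf
  obtain ⟨cc, hsupp, hsum⟩ := Submodule.mem_span_set.1 hf'
  have hrw : coeff (e 2 0) f = ∑ g ∈ cc.support, coeff (e 2 0) (cc g * g) := by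
    rw [← hsum, Finsupp.sum, coeff_sum]
    simp [smul_eq_mul]
  rw [hrw] at hxi
  obtain ⟨g, hgsup, hgne⟩ := Finset.exists_ne_zero_of_sum_ne_zero hxi
  have hgS : g ∈ S := hsupp hgsup
  have hgJ : g ∈ Ideal.span S := Ideal.subset_span hgS
  obtain ⟨lam, mu, a, b, c, d, hg⟩ := hS g hgS
  have hgm : g = monomial (e a b) lam - monomial (e c d) mu := by
    rw [hg, ← CM_eq, ← CM_eq]
  have hgne0 : g ≠ 0 := by
    intro h0
    rw [h0, mul_zero] at hgne
    exact hgne (coeff_zero _)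
  have hgne2 : coeff (e 2 0) (cc g * (monomial (e a b) lam - monomial (e c d) mu)) ≠ 0 := by
    rw [← hgm]; exact hgne
  rw [mul_sub, coeff_sub, coeff_mul_mono, coeff_mul_mono] at hgne2
  have hor : (if a ≤ 2 ∧ b ≤ 0 then coeff (e (2-a) (0-b)) (cc g) * lam else 0) ≠ 0
      ∨ (if c ≤ 2 ∧ d ≤ 0 then coeff (e (2-c) (0-d)) (cc g) * mu else 0) ≠ 0 := by
    by_contra hcon
    push_neg at hcon
    rw [hcon.1, hcon.2, sub_zero] at hgne2
    exact hgne2 rfl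
  rcases hor with h1 | h1
  · split_ifs at h1 with hab
    · obtain ⟨ha, hb⟩ := hab
      have hb0 : b = 0 := Nat.le_zero.1 hb
      subst hb0
      have hlam : lam ≠ 0 := right_ne_zero_of_mul h1
      have hs : monomial (e a 0) lam - monomial (e c d) mu ∈ Ideal.span S := by
        rw [← hgm]; exact hgJ
      refine B1 hIJ hs hlam ha ?_
      rintro ⟨rfl, rfl, rfl⟩
      exact hgne0 (by rw [hgm, sub_self])
    · exact absurd rfl h1
  · split_ifs at h1 with hcd
    · obtain ⟨hc, hd⟩ := hcd
      have hd0 : d = 0 := Nat.le_zero.1 hd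
      subst hd0
      have hmu : mu ≠ 0 := right_ne_zero_of_mul h1
      have hs : monomial (e c 0) mu - monomial (e a b) lam ∈ Ideal.span S := by
        have : monomial (e c 0) mu - monomial (e a b) lam = -g := by rw [hgm]; ring
        rw [this]
        exact neg_mem hgJ
      refine B1 hIJ hs hmu hc ?_
      rintro ⟨rfl, rfl, rfl⟩
      exact hgne0 (by rw [hgm, sub_self])
    · exact absurd rfl h1

end Stmt11Aux
end Part5
section Part6
namespace Stmt11Aux
variable {k : Type*} [Field k]

noncomputable def v0 : MvPolynomial (Fin 2) k := M 2 0 - M 1 1 + M 0 2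

lemma X0_mul_v0 : (M 1 0 : MvPolynomial (Fin 2) k) * v0 = g2 - g1 := by
  rw [v0, g1, g2, mul_add, mul_sub, M_mulM, M_mulM, M_mulM]
  try ring

lemma X1_mul_v0 : (M 0 1 : MvPolynomial (Fin 2) k) * v0 = g1 + g3 := by
  rw [v0, g1, g3, mul_add, mul_sub, M_mulM, M_mulM, M_mulM]
  try ring

lemma pv0 : ∀ p : MvPolynomial (Fin 2) k,
    p * v0 - monomial (e 0 0) (coeff (e 0 0) p) * v0 ∈ Iid := by
  have hadd : ∀ p q : MvPolynomial (Fin 2) k,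
      p * v0 - monomial (e 0 0) (coeff (e 0 0) p) * v0 ∈ Iid →
      q * v0 - monomial (e 0 0) (coeff (e 0 0) q) * v0 ∈ Iid →
      (p + q) * v0 - monomial (e 0 0) (coeff (e 0 0) (p + q)) * v0 ∈ Iid := by
    intro p q hp hq
    have hrw : (p + q) * v0 - monomial (e 0 0) (coeff (e 0 0) (p + q)) * v0
        = (p * v0 - monomial (e 0 0) (coeff (e 0 0) p) * v0)
          + (q * v0 - monomial (e 0 0) (coeff (e 0 0) q) * v0) := by
      rw [coeff_add, map_add]
      ring
    rw [hrw]
    exact add_mem hp hq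
  have h0 : (0 : MvPolynomial (Fin 2) k) * v0
      - monomial (e 0 0) (coeff (e 0 0) (0 : MvPolynomial (Fin 2) k)) * v0 ∈ Iid := by
    simp
  have hmono : ∀ (m : Fin 2 →₀ ℕ) (r : k),
      (monomial m r : MvPolynomial (Fin 2) k) * v0
        - monomial (e 0 0) (coeff (e 0 0) (monomial m r)) * v0 ∈ Iid := by
    intro m r
    obtain ⟨a, b, rfl⟩ : ∃ a b, m = e a b := ⟨m 0, m 1, (e_recon m).symm⟩
    rcases Nat.eq_zero_or_pos a with ha | ha
    · subst ha
      rcases Nat.eq_zero_or_pos b with hb | hb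
      · subst hb
        rw [coeff_mono, if_pos ⟨rfl, rfl⟩, sub_self]
        exact zero_mem _
      · rw [coeff_mono_ne (by omega) r, monomial_zero, zero_mul, sub_zero]
        have hfac : (monomial (e 0 b) r : MvPolynomial (Fin 2) k) * v0
            = monomial (e 0 (b-1)) r * ((M 0 1) * v0) := by
          rw [← mul_assoc, M, monomial_mul, mul_one, e_add,
            (by omega : 0 + 0 = 0), (by omega : b - 1 + 1 = b)]
        rw [hfac, X1_mul_v0]
        exact Ideal.mul_mem_left _ _ (add_mem g1_mem g3_mem)
    · rw [coeff_mono_ne (by omega) r, monomial_zero, zero_mul, sub_zero]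
      have hfac : (monomial (e a b) r : MvPolynomial (Fin 2) k) * v0
          = monomial (e (a-1) b) r * ((M 1 0) * v0) := by
        rw [← mul_assoc, M, monomial_mul, mul_one, e_add,
          (by omega : a - 1 + 1 = a), (by omega : b + 0 = b)]
      rw [hfac, X0_mul_v0]
      exact Ideal.mul_mem_left _ _ (sub_mem g2_mem g1_mem)
  intro p
  have key := Finset.sum_induction (s := p.support)
    (fun m => (monomial m (coeff m p) : MvPolynomial (Fin 2) k))
    (fun q => q * v0 - monomial (e 0 0) (coeff (e 0 0) q) * v0 ∈ Iid)
    hadd h0 (fun m _ => hmono m (coeff m p))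
  have hrw : p * v0 - monomial (e 0 0) (coeff (e 0 0) p) * v0
      = (∑ m ∈ p.support, monomial m (coeff m p)) * v0
        - monomial (e 0 0) (coeff (e 0 0) (∑ m ∈ p.support, monomial m (coeff m p))) * v0 := by
    rw [← as_sum]
  rw [hrw]
  exact key

lemma mem_span_quad {a b c d f : MvPolynomial (Fin 2) k} :
    f ∈ Ideal.span {a, b, c, d} → ∃ p q r s, f = p * a + q * b + r * c + s * d := by
  intro hf
  rw [show ({a, b, c, d} : Set (MvPolynomial (Fin 2) k))
      = insert a (insert b (insert c {d})) from rfl, Ideal.mem_span_insert] at hf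
  obtain ⟨p, z, hz, rfl⟩ := hf
  rw [Ideal.mem_span_insert] at hz
  obtain ⟨q, w, hw, rfl⟩ := hz
  rw [Ideal.mem_span_insert] at hw
  obtain ⟨r, u, hu, rfl⟩ := hw
  rw [Ideal.mem_span_singleton'] at hu
  obtain ⟨s, rfl⟩ := hu
  exact ⟨p, q, r, s, by ring⟩

lemma coeff20_B {f : MvPolynomial (Fin 2) k}
    (hf : f ∈ Ideal.span ({g2, g3, M 2 1, M 1 2} : Set (MvPolynomial (Fin 2) k))) :
    coeff (e 2 0) f = 0 := by
  obtain ⟨p, q, r, s, rfl⟩ := mem_span_quad hf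
  rw [g2, g3, M, M, M, M]
  simp only [coeff_add]
  rw [coeff_mul_mono_zero p (1:k) (by omega), coeff_mul_mono_zero q (1:k) (by omega),
    coeff_mul_mono_zero r (1:k) (by omega), coeff_mul_mono_zero s (1:k) (by omega)]
  ring

lemma coeff20_v0 : coeff (e 2 0) (v0 : MvPolynomial (Fin 2) k) = 1 := by
  rw [v0, M, M, M, coeff_add, coeff_sub, coeff_mono, coeff_mono, coeff_mono]
  norm_num

lemma v0_not_mem : (v0 : MvPolynomial (Fin 2) k) ∉ Iid := by
  intro h
  have := coeff_I_small h (c := 2) (d := 0) (by norm_num)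
  rw [coeff20_v0] at this
  exact one_ne_zero this

lemma not_irr : ¬ IsIrreducibleIdeal (Iid : Ideal (MvPolynomial (Fin 2) k)) := by
  intro hirr
  set A := (Iid : Ideal (MvPolynomial (Fin 2) k)) ⊔ Ideal.span {v0} with hA
  set B := Ideal.span ({g2, g3, M 2 1, M 1 2} : Set (MvPolynomial (Fin 2) k)) with hB
  have hIA : (Iid : Ideal (MvPolynomial (Fin 2) k)) ≤ A := le_sup_left
  have hIB : (Iid : Ideal (MvPolynomial (Fin 2) k)) ≤ B := by
    rw [Iid, Ideal.span_le]
    rintro u (rfl | rfl | rfl)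
    · have h21 : (M 2 1 : MvPolynomial (Fin 2) k) ∈ B := Ideal.subset_span (by simp)
      have h12 : (M 1 2 : MvPolynomial (Fin 2) k) ∈ B := Ideal.subset_span (by simp)
      rw [g1]
      exact sub_mem h21 h12
    · exact Ideal.subset_span (by simp)
    · exact Ideal.subset_span (by simp)
  have hmain : (Iid : Ideal (MvPolynomial (Fin 2) k)) = A ⊓ B := by
    refine le_antisymm (le_inf hIA hIB) ?_
    rintro f ⟨hfA, hfB⟩
    obtain ⟨i, hi, q, hq, hiq⟩ := Submodule.mem_sup.1 hfA
    obtain ⟨p, rfl⟩ := Ideal.mem_span_singleton'.1 hq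
    have hkey := pv0 p
    have hfI : f - monomial (e 0 0) (coeff (e 0 0) p) * v0 ∈ Iid := by
      have hrw : f - monomial (e 0 0) (coeff (e 0 0) p) * v0
          = i + (p * v0 - monomial (e 0 0) (coeff (e 0 0) p) * v0) := by
        rw [← hiq]; ring
      rw [hrw]
      exact add_mem hi hkey
    have hBmem : monomial (e 0 0) (coeff (e 0 0) p) * v0 ∈ B := by
      have hrw : monomial (e 0 0) (coeff (e 0 0) p) * v0
          = f - (f - monomial (e 0 0) (coeff (e 0 0) p) * v0) := by ring
      rw [hrw]
      exact sub_mem hfB (hIB hfI)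
    have hc0 : coeff (e 0 0) p = 0 := by
      have h20 := coeff20_B hBmem
      have hrw : monomial (e 0 0) (coeff (e 0 0) p) * v0
          = monomial (e 2 0) (coeff (e 0 0) p) - monomial (e 1 1) (coeff (e 0 0) p)
            + monomial (e 0 2) (coeff (e 0 0) p) := by
        rw [v0, mul_add, mul_sub, M, M, M, monomial_mul, monomial_mul, monomial_mul,
          e_add, e_add, e_add, mul_one]
      rw [hrw, coeff_add, coeff_sub, coeff_mono, coeff_mono, coeff_mono] at h20
      simpa using h20
    rw [hc0, monomial_zero, zero_mul, sub_zero] at hfI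
    exact hfI
  rcases hirr A B hmain with h | h
  · refine v0_not_mem (k := k) ?_
    rw [h, hA]
    exact Submodule.mem_sup_right (Ideal.subset_span (Set.mem_singleton _))
  · refine z_not_mem (k := k) ?_
    rw [h, hB]
    exact Ideal.subset_span
      (by simp : (M 2 1 : MvPolynomial (Fin 2) k) ∈
        ({g2, g3, M 2 1, M 1 2} : Set (MvPolynomial (Fin 2) k)))

end Stmt11Aux
end Part6
section Part7
namespace Stmt11Aux
variable {k : Type*} [Field k]

lemma key_z {J : Ideal (MvPolynomial (Fin 2) k)} (hbin : IsBinomialIdeal J)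
    (hle : Iid ≤ J) (hne : Iid ≠ J) : (M 2 1 : MvPolynomial (Fin 2) k) ∈ J := by
  obtain ⟨w, hwJ, hwI, hx, hy⟩ := socle_ex J hle hne
  by_cases h20 : coeff (e 2 0) w = 0
  · obtain ⟨r, hr, hsub⟩ := socle_rep hwI hx hy h20
    have hmem : monomial (e 2 1) r ∈ J := by
      have := sub_mem hwJ (hle hsub)
      rwa [sub_sub_cancel] at this
    rw [monoM21]
    exact mem_scale hr hmem
  · exact binomial_z hbin hle hwJ h20

end Stmt11Aux
end Part7

open Stmt11Aux
theorem stmt11 (k : Type*) [Field k] :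
    let x : MvPolynomial (Fin 2) k := X 0
    let y : MvPolynomial (Fin 2) k := X 1
    let I : Ideal (MvPolynomial (Fin 2) k) :=
      Ideal.span {x ^ 2 * y - x * y ^ 2, x ^ 3, y ^ 3}
    ¬ ∃ I₁ I₂ : Ideal (MvPolynomial (Fin 2) k),
        IsBinomialIdeal I₁ ∧ IsBinomialIdeal I₂ ∧
        IsIrreducibleIdeal I₁ ∧ IsIrreducibleIdeal I₂ ∧ I = I₁ ⊓ I₂ := by
  intro x y I
  rintro ⟨J₁, J₂, hb₁, hb₂, hi₁, hi₂, hI⟩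
  have hIeq : I = (Iid : Ideal (MvPolynomial (Fin 2) k)) := by
    show Ideal.span {x ^ 2 * y - x * y ^ 2, x ^ 3, y ^ 3} = _
    have h1 : x ^ 2 * y - x * y ^ 2 = (g1 : MvPolynomial (Fin 2) k) := by
      rw [g1, M_eq, M_eq, pow_one, pow_one]
    have h2 : x ^ 3 = (g2 : MvPolynomial (Fin 2) k) := by
      rw [g2, M_eq, pow_zero, mul_one]
    have h3 : y ^ 3 = (g3 : MvPolynomial (Fin 2) k) := by
      rw [g3, M_eq, pow_zero, one_mul]
    rw [h1, h2, h3, Iid]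
  rw [hIeq] at hI
  have hle₁ : (Iid : Ideal (MvPolynomial (Fin 2) k)) ≤ J₁ := hI ▸ inf_le_left
  have hle₂ : (Iid : Ideal (MvPolynomial (Fin 2) k)) ≤ J₂ := hI ▸ inf_le_right
  have hne₁ : (Iid : Ideal (MvPolynomial (Fin 2) k)) ≠ J₁ := by
    intro h
    exact not_irr (h ▸ hi₁)
  have hne₂ : (Iid : Ideal (MvPolynomial (Fin 2) k)) ≠ J₂ := by
    intro h
    exact not_irr (h ▸ hi₂)
  have hz₁ := key_z hb₁ hle₁ hne₁
  have hz₂ := key_z hb₂ hle₂ hne₂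
  have : (M 2 1 : MvPolynomial (Fin 2) k) ∈ (Iid : Ideal (MvPolynomial (Fin 2) k)) := by
    rw [hI]
    exact ⟨hz₁, hz₂⟩
  exact z_not_mem this
end

section
/- Let R be a commutative ring, M an R-module, N ⊆ M an essential submodule, and S ⊆ R a multiplicative set. Then the localization S⁻¹N is an essential S⁻¹R-submodule of S⁻¹M, provided R is Noetherian and M is finitely generated. -/
/-- A submodule N of M is essential if it meets every nonzero submodule nontrivially. -/
def IsEssentialSubmodule {R M : Type*} [CommRing R] [AddCommGroup M] [Module R M]
    (N : Submodule R M) : Prop :=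
  ∀ P : Submodule R M, P ≠ ⊥ → N ⊓ P ≠ ⊥

/-- Over a Noetherian module, the `S`-torsion submodule (the kernel of the localization map)
is killed by a single element of `S`. -/
lemma exists_smul_ker_eq_zero {R M : Type*} [CommRing R] [IsNoetherianRing R]
    [AddCommGroup M] [Module R M] [Module.Finite R M] (S : Submonoid R) :
    ∃ t : S, ∀ x ∈ LinearMap.ker (LocalizedModule.mkLinearMap S M), (t : R) • x = 0 := by
  have : IsNoetherian R M := isNoetherian_of_isNoetherianRing_of_finite R M
  obtain ⟨s, hs⟩ := (IsNoetherian.noetherian (LinearMap.ker (LocalizedModule.mkLinearMap S M)))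
  have H : ∀ x : s, ∃ t : S, (t : R) • (x : M) = 0 := by
    rintro ⟨x, hx⟩
    have hxk : x ∈ LinearMap.ker (LocalizedModule.mkLinearMap S M) := by
      rw [← hs]; exact Submodule.subset_span hx
    rw [LinearMap.mem_ker] at hxk
    exact (IsLocalizedModule.eq_zero_iff S (LocalizedModule.mkLinearMap S M)).mp hxk
  choose ts hts using H
  refine ⟨∏ x ∈ s.attach, ts x, ?_⟩
  intro x hx
  rw [← hs] at hx
  have key : ∀ y ∈ (s : Set M), ((∏ x ∈ s.attach, ts x : S) : R) • y = 0 := by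
    intro y hy
    have hdvd : (ts ⟨y, hy⟩ : R) ∣ ((∏ x ∈ s.attach, ts x : S) : R) := by
      have : (ts ⟨y, hy⟩) ∣ (∏ x ∈ s.attach, ts x) :=
        Finset.dvd_prod_of_mem ts (Finset.mem_attach s ⟨y, hy⟩)
      obtain ⟨c, hc⟩ := this
      exact ⟨(c : R), by rw [hc]; rfl⟩
    obtain ⟨c, hc⟩ := hdvd
    rw [hc, mul_comm, mul_smul, hts ⟨y, hy⟩, smul_zero]
  refine Submodule.span_induction key (by simp) (fun a b _ _ ha hb => by
    rw [smul_add, ha, hb, add_zero]) (fun r a _ ha => by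
    rw [smul_comm, ha, smul_zero]) hx

theorem stmt14 (R M : Type*) [CommRing R] [IsNoetherianRing R]
    [AddCommGroup M] [Module R M] [Module.Finite R M]
    (S : Submonoid R) (N : Submodule R M) (hN : IsEssentialSubmodule N) :
    IsEssentialSubmodule (N.localized S) := by
  classical
  set f := LocalizedModule.mkLinearMap S M with hf
  obtain ⟨t, ht⟩ := exists_smul_ker_eq_zero (M := M) S
  intro P hP
  rw [Submodule.ne_bot_iff] at hP
  obtain ⟨x, hxP, hx0⟩ := hP
  obtain ⟨⟨m, s⟩, rfl⟩ := IsLocalizedModule.mk'_surjective S f x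
  simp only [Function.uncurry] at hxP hx0 ⊢
  -- the image of m in the localization is nonzero
  have hfm : f m ≠ 0 := fun h => hx0 ((IsLocalizedModule.mk'_eq_zero s).mpr h)
  -- Q : the preimage of P in M
  set Q : Submodule R M := (P.restrictScalars R).comap f with hQ
  have hmQ : m ∈ Q := by
    have : (s : R) • IsLocalizedModule.mk' f m s ∈ P.restrictScalars R := by
      exact Submodule.smul_mem _ _ hxP
    have heq : (s : R) • IsLocalizedModule.mk' f m s = f m := by
      rw [← Submonoid.smul_def, IsLocalizedModule.mk'_cancel']
    rwa [heq] at this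
  -- t • Q is a nonzero submodule of M
  set Q' : Submodule R M := Q.map (LinearMap.lsmul R M (t : R)) with hQ'
  have hQ'le : Q' ≤ Q := by
    rintro _ ⟨q, hq, rfl⟩
    exact Q.smul_mem _ hq
  have hQ'ne : Q' ≠ ⊥ := by
    rw [Submodule.ne_bot_iff]
    refine ⟨(t : R) • m, ⟨m, hmQ, rfl⟩, fun h => hfm ?_⟩
    exact (IsLocalizedModule.eq_zero_iff S f).mpr ⟨t, h⟩
  obtain ⟨n, hn, hn0⟩ := Submodule.ne_bot_iff _ |>.mp (hN Q' hQ'ne)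
  obtain ⟨hnN, hnQ'⟩ := hn
  obtain ⟨q, hq, hqn⟩ := hnQ'
  simp only [LinearMap.lsmul_apply] at hqn
  -- n = t • q, n ∈ N, n ∈ Q, and f n ≠ 0
  have hfn : f n ≠ 0 := by
    intro h
    apply hn0
    have hnker : n ∈ LinearMap.ker f := h
    have : (t : R) • n = 0 := ht n hnker
    -- then (t*t) • q = 0, so q is torsion, so t • q = 0, i.e. n = 0
    have hq0 : ((t * t : S) : R) • q = 0 := by
      have : (t : R) • (t : R) • q = 0 := by rw [hqn]; exact this
      rw [Submonoid.coe_mul, mul_smul]; exact this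
    have hqker : q ∈ LinearMap.ker f := by
      rw [LinearMap.mem_ker]
      exact (IsLocalizedModule.eq_zero_iff S f).mpr ⟨t * t, hq0⟩
    rw [← hqn]
    exact ht q hqker
  rw [Submodule.ne_bot_iff]
  refine ⟨f n, ⟨?_, ?_⟩, hfn⟩
  · exact ⟨n, hnN, 1, IsLocalizedModule.mk'_one S f n⟩
  · have : n ∈ Q := hQ'le ⟨q, hq, hqn⟩
    exact this
end
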